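/- Let G be an n×n complex matrix with eigenvalue ξ and eigenvector u (Gu = ξu, u ≠ 0), and Q = uvᵀ with vᵀu = 1. Then det(zI - (G - ξQ)) = (z/(z-ξ)) det(zI - G) for z ∉ {ξ}; i.e., the eigenvalues of G - ξQ are those of G with one occurrence of ξ replaced by 0. -/

import Mathlib

open Matrix

/-- Brauer's theorem specialized: if `Gu = ξu`, `u ≠ 0`, `Q = uvᵀ` with `vᵀu = 1`, then
`det(zI - (G - ξQ)) = (z/(z-ξ)) det(zI - G)` for `z ≠ ξ`. -/
theorem shifted_eigenvalues {n : ℕ} (G : Matrix (Fin n) (Fin n) ℂ) (ξ : ℂ)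
    (u v : Fin n → ℂ) (hu : u ≠ 0) (hGu : G.mulVec u = ξ • u) (huv : v ⬝ᵥ u = 1)
    (z : ℂ) (hz : z ≠ ξ) :
    (z • (1 : Matrix (Fin n) (Fin n) ℂ) - (G - ξ • vecMulVec u v)).det
      = (z / (z - ξ)) * (z • (1 : Matrix (Fin n) (Fin n) ℂ) - G).det := by
  by_cases hz0 : z = 0
  · -- z = 0 : both sides are 0, since (G - ξ uvᵀ) u = 0
    subst hz0
    have hker : (((0:ℂ) • (1 : Matrix (Fin n) (Fin n) ℂ) - (G - ξ • vecMulVec u v))).mulVec u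
        = 0 := by
      have hQ : (vecMulVec u v).mulVec u = (v ⬝ᵥ u) • u := by
        ext i
        simp only [mulVec, dotProduct, vecMulVec_apply, Pi.smul_apply, smul_eq_mul]
        rw [Finset.sum_mul]
        exact Finset.sum_congr rfl fun x _ => by ring
      rw [sub_mulVec, sub_mulVec, smul_mulVec, smul_mulVec, hGu, hQ, huv]
      simp
    have hdet : (((0:ℂ) • (1 : Matrix (Fin n) (Fin n) ℂ) - (G - ξ • vecMulVec u v))).det = 0 := by
      rw [← Matrix.exists_mulVec_eq_zero_iff]
      exact ⟨u, hu, hker⟩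
    rw [hdet]
    simp
  · -- z ≠ 0 : matrix determinant lemma style argument
    set C : Matrix (Fin n) (Fin n) ℂ := replicateCol (Fin 1) u * replicateRow (Fin 1) v with hC
    have hvmv : vecMulVec u v = C := vecMulVec_eq (Fin 1) u v
    have hGC : G * C = ξ • C := by
      rw [hC, ← Matrix.mul_assoc, ← replicateCol_mulVec, hGu]
      ext i j
      simp [replicateCol, mul_apply]
      ring
    have hCC : C * C = C := by
      rw [hC]
      calc replicateCol (Fin 1) u * replicateRow (Fin 1) v * (replicateCol (Fin 1) u * replicateRow (Fin 1) v)
          = replicateCol (Fin 1) u * (replicateRow (Fin 1) v * replicateCol (Fin 1) u) * replicateRow (Fin 1) v := by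
            simp [Matrix.mul_assoc]
        _ = replicateCol (Fin 1) u * replicateRow (Fin 1) v := by
            rw [replicateRow_mul_replicateCol, huv]
            congr 1
            ext i j
            simp [replicateCol, mul_apply]
    have key : (z • (1 : Matrix (Fin n) (Fin n) ℂ) - (G - ξ • vecMulVec u v))
        * ((1 : Matrix (Fin n) (Fin n) ℂ) - (ξ/z) • C)
        = z • (1 : Matrix (Fin n) (Fin n) ℂ) - G := by
      rw [hvmv]
      have expand : (z • (1 : Matrix (Fin n) (Fin n) ℂ) - (G - ξ • C))
          * ((1 : Matrix (Fin n) (Fin n) ℂ) - (ξ/z) • C)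
          = z • (1 : Matrix (Fin n) (Fin n) ℂ) - G + ξ • C - (ξ/z) •
            (z • C - (G * C - ξ • (C * C))) := by
        simp only [Matrix.sub_mul, Matrix.mul_sub, Matrix.mul_smul, Matrix.smul_mul,
          Matrix.mul_one, Matrix.one_mul]
        abel
      rw [expand, hGC, hCC]
      have : (ξ/z) • (z • C - (ξ • C - ξ • C)) = ξ • C := by
        rw [sub_self, sub_zero, smul_smul, div_mul_cancel₀ _ hz0]
      rw [this]
      abel
    have hdetC : ((1 : Matrix (Fin n) (Fin n) ℂ) - (ξ/z) • C).det = (z - ξ)/z := by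
      have : (1 : Matrix (Fin n) (Fin n) ℂ) - (ξ/z) • C
          = 1 + replicateCol (Fin 1) ((-(ξ/z)) • u) * replicateRow (Fin 1) v := by
        rw [hC]
        ext i j
        simp [replicateCol, replicateRow, mul_apply, Finset.mul_sum]
        ring
      rw [this]
      erw [det_one_add_replicateCol_mul_replicateRow (ι := Fin 1)]
      rw [dotProduct_smul, huv, smul_eq_mul, mul_one]
      field_simp
      ring
    have := congrArg Matrix.det key
    rw [det_mul, hdetC] at this
    have hzsub : (z - ξ) ≠ 0 := sub_ne_zero.mpr hz
    field_simp at this ⊢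
    linear_combination this
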